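/- In the same setting, the process $w$ remains a Wiener process with respect to the enlarged filtration $(\mathcal M_t)$: $w$ is an $(\mathcal M_t)$-martingale, i.e. $\mathbb E[(w(t)-w(s))\,\xi]=0$ for every bounded $\mathcal M_s$-measurable $\xi$, and $|w(t)|^2-d\,t$ is an $(\mathcal M_t)$-martingale (equivalently, $(w(t),\theta)^2-|\theta|^2 t$ is a martingale for each $\theta\in\mathbb R^d$). -/

import Mathlib

open MeasureTheory ProbabilityTheory Filter
open scoped RealInnerProductSpace

noncomputable section
section AuxLemmas
open Real
open scoped NNReal ENNReal


lemma aux_integral_sq_exp {b : ℝ} (hb : 0 < b) :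
    ∫ x : ℝ, x ^ 2 * Real.exp (-b * x ^ 2) = (2 * b)⁻¹ * Real.sqrt (π / b) := by
  have hint_sq : Integrable (fun x : ℝ => x ^ 2 * Real.exp (-b * x ^ 2)) := by
    have h := integrable_rpow_mul_exp_neg_mul_sq hb (s := 2) (by norm_num)
    have : ∀ x : ℝ, x ^ (2 : ℝ) = x ^ (2 : ℕ) := fun x => by
      rw [show (2:ℝ) = ((2:ℕ):ℝ) by norm_num, Real.rpow_natCast]
    simpa [this] using h
  have hderiv : ∀ x : ℝ, HasDerivAt (fun y : ℝ => y * Real.exp (-b * y ^ 2))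
      (Real.exp (-b * x ^ 2) - 2 * b * (x ^ 2 * Real.exp (-b * x ^ 2))) x := by
    intro x
    have h1 : HasDerivAt (fun y : ℝ => -b * y ^ 2) (-b * (2 * x ^ 1)) x := by
      simpa using (hasDerivAt_pow 2 x).const_mul (-b)
    have h3 := (hasDerivAt_id x).mul h1.exp
    refine h3.congr_deriv ?_
    simp only [id_eq, pow_one]
    ring
  have h0 := integral_eq_zero_of_hasDerivAt_of_integrable hderiv
    ((integrable_exp_neg_mul_sq hb).sub (hint_sq.const_mul (2 * b)))
    (integrable_mul_exp_neg_mul_sq hb)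
  rw [integral_sub (integrable_exp_neg_mul_sq hb) (hint_sq.const_mul _), integral_const_mul,
    integral_gaussian] at h0
  have hb2 : (2 * b) ≠ 0 := by positivity
  rw [eq_inv_mul_iff_mul_eq₀ hb2]
  linarith

lemma aux_pdf_eq (v : ℝ≥0) :
    ∀ x : ℝ, gaussianPDFReal 0 v x
      = (Real.sqrt (2 * π * v))⁻¹ * Real.exp (-(2 * (v:ℝ))⁻¹ * x ^ 2) := by
  intro x
  rw [gaussianPDFReal]
  congr 1
  rw [sub_zero]
  ring_nf

lemma aux_gaussianReal_integral (v : ℝ≥0) (hv : v ≠ 0) (g : ℝ → ℝ) :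
    ∫ x, g x ∂(gaussianReal 0 v) = ∫ x, gaussianPDFReal 0 v x * g x := by
  rw [gaussianReal_of_var_ne_zero 0 hv]
  have : (gaussianPDF 0 v) = fun x => ((Real.toNNReal (gaussianPDFReal 0 v x) : ℝ≥0) : ℝ≥0∞) :=
    rfl
  rw [this, integral_withDensity_eq_integral_smul
    ((measurable_gaussianPDFReal 0 v).real_toNNReal) g]
  congr 1
  funext x
  simp [NNReal.smul_def, Real.coe_toNNReal _ (gaussianPDFReal_nonneg 0 v x)]

lemma aux_gaussianReal_integrable (v : ℝ≥0) (hv : v ≠ 0) (g : ℝ → ℝ)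
    (h : Integrable (fun x => gaussianPDFReal 0 v x * g x)) :
    Integrable g (gaussianReal 0 v) := by
  rw [gaussianReal_of_var_ne_zero 0 hv]
  have : (gaussianPDF 0 v) = fun x => ((Real.toNNReal (gaussianPDFReal 0 v x) : ℝ≥0) : ℝ≥0∞) :=
    rfl
  rw [this, integrable_withDensity_iff_integrable_smul
    ((measurable_gaussianPDFReal 0 v).real_toNNReal)]
  apply h.congr
  filter_upwards with x
  simp [NNReal.smul_def, Real.coe_toNNReal _ (gaussianPDFReal_nonneg 0 v x)]

lemma aux_integrable_id_gaussian (v : ℝ≥0) : Integrable (fun x => x) (gaussianReal 0 v) := by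
  rcases eq_or_ne v 0 with rfl | hv
  · rw [gaussianReal_zero_var]
    refine ⟨measurable_id.aestronglyMeasurable, ?_⟩
    simp [HasFiniteIntegral, lintegral_dirac]
  · apply aux_gaussianReal_integrable v hv
    have hb : (0:ℝ) < (2 * (v:ℝ))⁻¹ := by
      have : (0:ℝ) < v := by
        simpa using (pos_iff_ne_zero.mpr hv : 0 < v)
      positivity
    have : (fun x : ℝ => gaussianPDFReal 0 v x * x)
        = fun x => (Real.sqrt (2 * π * v))⁻¹ * (x * Real.exp (-(2 * (v:ℝ))⁻¹ * x ^ 2)) := by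
      funext x; rw [aux_pdf_eq]; ring
    rw [this]
    exact (integrable_mul_exp_neg_mul_sq hb).const_mul _

lemma aux_integral_id_gaussian (v : ℝ≥0) : ∫ x, x ∂(gaussianReal 0 v) = 0 := by
  rcases eq_or_ne v 0 with rfl | hv
  · rw [gaussianReal_zero_var, integral_dirac]
  · rw [aux_gaussianReal_integral v hv]
    have hodd : ∀ x : ℝ, gaussianPDFReal 0 v (-x) * (-x) = -(gaussianPDFReal 0 v x * x) := by
      intro x
      rw [aux_pdf_eq, aux_pdf_eq, neg_sq]
      ring
    have h1 := integral_neg_eq_self (fun x : ℝ => gaussianPDFReal 0 v x * x) volume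
    simp only [hodd, integral_neg] at h1
    linarith

lemma aux_integrable_sq_gaussian (v : ℝ≥0) :
    Integrable (fun x => x ^ 2) (gaussianReal 0 v) := by
  rcases eq_or_ne v 0 with rfl | hv
  · rw [gaussianReal_zero_var]
    refine ⟨(measurable_id.pow_const 2).aestronglyMeasurable, ?_⟩
    simp [HasFiniteIntegral, lintegral_dirac]
  · apply aux_gaussianReal_integrable v hv
    have hv' : (0:ℝ) < v := by simpa using (pos_iff_ne_zero.mpr hv : 0 < v)
    have hb : (0:ℝ) < (2 * (v:ℝ))⁻¹ := by positivity
    have hsq : Integrable (fun x : ℝ => x ^ 2 * Real.exp (-(2 * (v:ℝ))⁻¹ * x ^ 2)) := by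
      have h := integrable_rpow_mul_exp_neg_mul_sq hb (s := 2) (by norm_num)
      have h2 : ∀ x : ℝ, x ^ (2 : ℝ) = x ^ (2 : ℕ) := fun x => by
        rw [show (2:ℝ) = ((2:ℕ):ℝ) by norm_num, Real.rpow_natCast]
      simpa [h2] using h
    have : (fun x : ℝ => gaussianPDFReal 0 v x * x ^ 2)
        = fun x => (Real.sqrt (2 * π * v))⁻¹ * (x ^ 2 * Real.exp (-(2 * (v:ℝ))⁻¹ * x ^ 2)) := by
      funext x; rw [aux_pdf_eq]; ring
    rw [this]
    exact hsq.const_mul _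

lemma aux_integral_sq_gaussian (v : ℝ≥0) : ∫ x, x ^ 2 ∂(gaussianReal 0 v) = v := by
  rcases eq_or_ne v 0 with rfl | hv
  · rw [gaussianReal_zero_var, integral_dirac]
    norm_num
  · rw [aux_gaussianReal_integral v hv]
    have hv' : (0:ℝ) < v := by simpa using (pos_iff_ne_zero.mpr hv : 0 < v)
    set b : ℝ := (2 * (v:ℝ))⁻¹ with hbdef
    have hb : (0:ℝ) < b := by positivity
    have : (fun x : ℝ => gaussianPDFReal 0 v x * x ^ 2)
        = fun x => (Real.sqrt (2 * π * v))⁻¹ * (x ^ 2 * Real.exp (-b * x ^ 2)) := by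
      funext x; rw [aux_pdf_eq]; ring
    rw [this, integral_const_mul, aux_integral_sq_exp hb]
    have h2b : (2 * b)⁻¹ = (v:ℝ) := by
      rw [hbdef]; field_simp
    have hpb : π / b = 2 * π * v := by
      rw [hbdef]; field_simp
    rw [h2b, hpb]
    have hs : Real.sqrt (2 * π * v) > 0 := Real.sqrt_pos.mpr (by positivity)
    field_simp

lemma aux_indep_sup {Ω : Type} {m1 m2 m3 : MeasurableSpace Ω} [mΩ : MeasurableSpace Ω]
    {P : Measure Ω} [IsProbabilityMeasure P]
    (h1 : m1 ≤ mΩ) (h2 : m2 ≤ mΩ) (h3 : m3 ≤ mΩ)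
    (h12 : Indep m1 m2 P) (h123 : Indep (m1 ⊔ m2) m3 P) : Indep m1 (m2 ⊔ m3) P := by
  set p2 : Set (Set Ω) :=
    {u | ∃ A, MeasurableSet[m2] A ∧ ∃ B, MeasurableSet[m3] B ∧ u = A ∩ B}
  refine IndepSets.indep (p2 := p2) h1 (sup_le h2 h3)
    (@MeasurableSpace.isPiSystem_measurableSet Ω m1) ?_
    (@MeasurableSpace.generateFrom_measurableSet Ω m1).symm ?_ ?_
  · -- IsPiSystem p2
    rintro u ⟨A, hA, B, hB, rfl⟩ u' ⟨A', hA', B', hB', rfl⟩ -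
    exact ⟨A ∩ A', hA.inter hA', B ∩ B', hB.inter hB', by rw [Set.inter_inter_inter_comm]⟩
  · -- m2 ⊔ m3 = generateFrom p2
    refine le_antisymm (sup_le ?_ ?_) (MeasurableSpace.generateFrom_le ?_)
    · intro u hu
      exact MeasurableSpace.measurableSet_generateFrom
        ⟨u, hu, Set.univ, MeasurableSet.univ, (Set.inter_univ u).symm⟩
    · intro u hu
      exact MeasurableSpace.measurableSet_generateFrom
        ⟨Set.univ, MeasurableSet.univ, u, hu, (Set.univ_inter u).symm⟩
    · rintro u ⟨A, hA, B, hB, rfl⟩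
      exact MeasurableSet.inter ((le_sup_left : m2 ≤ m2 ⊔ m3) _ hA)
        ((le_sup_right : m3 ≤ m2 ⊔ m3) _ hB)
  · -- IndepSets
    rw [IndepSets_iff]
    rintro u1 u2 hu1 ⟨A, hA, B, hB, rfl⟩
    have hu1' : MeasurableSet[m1 ⊔ m2] u1 := (le_sup_left : m1 ≤ m1 ⊔ m2) _ hu1
    have hA' : MeasurableSet[m1 ⊔ m2] A := (le_sup_right : m2 ≤ m1 ⊔ m2) _ hA
    have e1 : P (u1 ∩ (A ∩ B)) = P (u1 ∩ A) * P B := by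
      rw [← Set.inter_assoc]
      exact (Indep_iff _ _ _).1 h123 _ _ (hu1'.inter hA') hB
    have e2 : P (u1 ∩ A) = P u1 * P A := (Indep_iff _ _ _).1 h12 _ _ hu1 hA
    have e3 : P (A ∩ B) = P A * P B := (Indep_iff _ _ _).1 h123 _ _ hA' hB
    rw [e1, e2, e3, mul_assoc]

end AuxLemmas


variable {Ω : Type} [MeasurableSpace Ω]

/-- A standard one-dimensional Wiener process on `(Ω, P)`. -/
structure IsWiener1 (P : Measure Ω) (w : ℝ → Ω → ℝ) : Prop where
  meas : ∀ t, Measurable (w t)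
  start : ∀ᵐ ω ∂P, w 0 ω = 0
  cont : ∀ᵐ ω ∂P, Continuous fun t => w t ω
  incr_indep : ∀ s t : ℝ, 0 ≤ s → s ≤ t →
    IndepFun (fun ω => w t ω - w s ω) (fun ω (u : Set.Icc (0:ℝ) s) => w u ω) P
  incr_law : ∀ s t : ℝ, 0 ≤ s → s ≤ t →
    Measure.map (fun ω => w t ω - w s ω) P = gaussianReal 0 (Real.toNNReal (t - s))

/-- A standard Wiener process with values in a Euclidean space `E`:
every projection on a unit vector of an increment is a centered Gaussian of
variance `t - s`, and increments are independent of the past. -/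
structure IsWiener {E : Type} [NormedAddCommGroup E] [InnerProductSpace ℝ E]
    [MeasurableSpace E] [BorelSpace E] (P : Measure Ω) (w : ℝ → Ω → E) : Prop where
  meas : ∀ t, Measurable (w t)
  start : ∀ᵐ ω ∂P, w 0 ω = 0
  cont : ∀ᵐ ω ∂P, Continuous fun t => w t ω
  incr_indep : ∀ s t : ℝ, 0 ≤ s → s ≤ t →
    IndepFun (fun ω => w t ω - w s ω) (fun ω (u : Set.Icc (0:ℝ) s) => w u ω) P
  incr_law : ∀ θ : E, ‖θ‖ = 1 → ∀ s t : ℝ, 0 ≤ s → s ≤ t →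
    Measure.map (fun ω => ⟪w t ω - w s ω, θ⟫) P = gaussianReal 0 (Real.toNNReal (t - s))

/-- A standard Wiener process taking values in the hyperplane `S` orthogonal to `ν`. -/
structure IsWienerIn {E : Type} [NormedAddCommGroup E] [InnerProductSpace ℝ E]
    [MeasurableSpace E] [BorelSpace E] (P : Measure Ω) (ν : E) (w : ℝ → Ω → E) : Prop where
  meas : ∀ t, Measurable (w t)
  start : ∀ᵐ ω ∂P, w 0 ω = 0
  cont : ∀ᵐ ω ∂P, Continuous fun t => w t ω
  mem : ∀ t ω, ⟪w t ω, ν⟫ = 0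
  incr_indep : ∀ s t : ℝ, 0 ≤ s → s ≤ t →
    IndepFun (fun ω => w t ω - w s ω) (fun ω (u : Set.Icc (0:ℝ) s) => w u ω) P
  incr_law : ∀ θ : E, ‖θ‖ = 1 → ⟪θ, ν⟫ = 0 → ∀ s t : ℝ, 0 ≤ s → s ≤ t →
    Measure.map (fun ω => ⟪w t ω - w s ω, θ⟫) P = gaussianReal 0 (Real.toNNReal (t - s))

/-- Two processes are independent (as path-valued random variables). -/
def IndepProc {E F : Type} [MeasurableSpace E] [MeasurableSpace F]
    (P : Measure Ω) (w : ℝ → Ω → E) (w' : ℝ → Ω → F) : Prop :=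
  IndepFun (fun ω (t : ℝ) => w t ω) (fun ω (t : ℝ) => w' t ω) P

/-- The natural filtration `F^w_t = σ{w(u), 0 ≤ u ≤ t}` of a process `w`. -/
def natFilt {E : Type} [MeasurableSpace E] (w : ℝ → Ω → E) (t : ℝ) : MeasurableSpace Ω :=
  ⨆ u ∈ Set.Icc (0:ℝ) t, MeasurableSpace.comap (w u) inferInstance

/-- The σ-algebra `F̃_t = σ{ {w̃(s) ∈ Γ} ∩ {η_t ≥ s} : s ≥ 0, Γ Borel }`. -/
def tildeFilt {E : Type} [MeasurableSpace E] (wt : ℝ → Ω → E) (η : ℝ → Ω → ℝ) (t : ℝ) :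
    MeasurableSpace Ω :=
  MeasurableSpace.generateFrom
    {A | ∃ s : ℝ, 0 ≤ s ∧ ∃ Γ : Set E, MeasurableSet Γ ∧
      A = {ω | wt s ω ∈ Γ ∧ s ≤ η t ω}}

/-- The enlarged filtration `M_t = F^w_t ∨ F̃_t`. -/
def MFilt {E F : Type} [MeasurableSpace E] [MeasurableSpace F]
    (w : ℝ → Ω → E) (wt : ℝ → Ω → F) (η : ℝ → Ω → ℝ) (t : ℝ) : MeasurableSpace Ω :=
  natFilt w t ⊔ tildeFilt wt η t

/-- `η` is a continuous nondecreasing process, adapted to the natural filtration of `w`,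
starting at `0`. -/
structure NiceEta {E : Type} [MeasurableSpace E] (P : Measure Ω) (w : ℝ → Ω → E)
    (η : ℝ → Ω → ℝ) : Prop where
  adapted : ∀ t : ℝ, 0 ≤ t → Measurable[natFilt w t] (η t)
  cont : ∀ᵐ ω ∂P, Continuous fun t => η t ω
  mono : ∀ᵐ ω ∂P, Monotone fun t => η t ω
  zero : ∀ᵐ ω ∂P, η 0 ω = 0

/-- `(x¹, η)` is a skew Brownian motion pair with parameter `q`, driven by the
one-dimensional Wiener process `w1` and started at `a`: `x¹(t) = a + q η_t + w¹(t)`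
and `η` is the symmetric local time of `x¹` at `0`. -/
structure IsSkewLT (P : Measure Ω) (q : ℝ) (w1 : ℝ → Ω → ℝ) (a : ℝ)
    (x1 : ℝ → Ω → ℝ) (η : ℝ → Ω → ℝ) : Prop where
  adapted_x : ∀ t : ℝ, 0 ≤ t → Measurable[natFilt w1 t] (x1 t)
  adapted_eta : ∀ t : ℝ, 0 ≤ t → Measurable[natFilt w1 t] (η t)
  cont : ∀ᵐ ω ∂P, Continuous fun t => η t ω
  mono : ∀ᵐ ω ∂P, Monotone fun t => η t ω
  zero : ∀ᵐ ω ∂P, η 0 ω = 0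
  eqn : ∀ t : ℝ, 0 ≤ t → ∀ᵐ ω ∂P, x1 t ω = a + q * η t ω + w1 t ω
  localTime : ∀ t : ℝ, 0 ≤ t → ∀ᵐ ω ∂P,
    Tendsto (fun ε : ℝ =>
        (1 / (2 * ε)) * ∫ τ in (0:ℝ)..t, (if |x1 τ ω| ≤ ε then (1:ℝ) else 0))
      (nhdsWithin 0 (Set.Ioi 0)) (nhds (η t ω))

/-- Orthogonal projection on the hyperplane orthogonal to the unit vector `ν`. -/
def projS {E : Type} [NormedAddCommGroup E] [InnerProductSpace ℝ E] (ν : E) (v : E) : E :=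
  v - ⟪v, ν⟫ • ν

/-- `x` solves, on `[s, ∞)`, the SDE
`x(t) = ξ + ∫_s^t (qν + α(xˢ(τ))) dη_τ + ∫_s^t β̃(xˢ(τ)) dζ_τ + w(t) - w(s)`,
the two integrals being understood as limits in probability of left Riemann sums
(Lebesgue–Stieltjes resp. Itô integrals). -/
structure SolvesFrom {E : Type} [NormedAddCommGroup E] [InnerProductSpace ℝ E]
    [MeasurableSpace E] [BorelSpace E]
    (P : Measure Ω) (Mfil : ℝ → MeasurableSpace Ω) (ν : E) (q : ℝ)
    (α : E → E) (βt : E → E →L[ℝ] E)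
    (w : ℝ → Ω → E) (η : ℝ → Ω → ℝ) (ζ : ℝ → Ω → E)
    (s : ℝ) (ξ : Ω → E) (x : ℝ → Ω → E) : Prop where
  init : ∀ᵐ ω ∂P, x s ω = ξ ω
  adapted : ∀ t : ℝ, s ≤ t → Measurable[Mfil t] (x t)
  cont : ∀ᵐ ω ∂P, ContinuousOn (fun t => x t ω) (Set.Ici s)
  eqn : ∀ t : ℝ, s ≤ t → ∃ A M : Ω → E,
    TendstoInMeasure P
      (fun n ω => ∑ k ∈ Finset.range n,
        (η (s + ((k:ℝ)+1) * (t - s) / n) ω - η (s + (k:ℝ) * (t - s) / n) ω) •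
          (q • ν + α (projS ν (x (s + (k:ℝ) * (t - s) / n) ω)))) atTop A ∧
    TendstoInMeasure P
      (fun n ω => ∑ k ∈ Finset.range n,
        (βt (projS ν (x (s + (k:ℝ) * (t - s) / n) ω)))
          (ζ (s + ((k:ℝ)+1) * (t - s) / n) ω - ζ (s + (k:ℝ) * (t - s) / n) ω)) atTop M ∧
    ∀ᵐ ω ∂P, x t ω = ξ ω + A ω + M ω + (w t ω - w s ω)

/-- `w` remains a Wiener process with respect to the enlarged filtration
`(M_t)`: it is an `(M_t)`-martingale, and for each `θ` the process `(w(t),θ)² - ‖θ‖² t` is an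
`(M_t)`-martingale. -/
theorem wiener_remains_wiener_wrt_enlarged_filtration
    {E F : Type} [NormedAddCommGroup E] [InnerProductSpace ℝ E] [MeasurableSpace E] [BorelSpace E]
    [CompleteSpace E]
    [NormedAddCommGroup F] [InnerProductSpace ℝ F] [MeasurableSpace F] [BorelSpace F]
    (P : Measure Ω) [IsProbabilityMeasure P]
    (w : ℝ → Ω → E) (wt : ℝ → Ω → F) (η : ℝ → Ω → ℝ)
    (hw : IsWiener P w) (hwt : IsWiener P wt) (hind : IndepProc P w wt)
    (hη : NiceEta P w η) :
    ∀ s t : ℝ, 0 ≤ s → s ≤ t → ∀ ξ : Ω → ℝ,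
      Measurable[MFilt w wt η s] ξ → (∃ C, ∀ ω, |ξ ω| ≤ C) →
      (∫ ω, ξ ω • (w t ω - w s ω) ∂P = 0) ∧
      ∀ θ : E,
        ∫ ω, ((⟪w t ω, θ⟫ ^ 2 - ‖θ‖ ^ 2 * t) - (⟪w s ω, θ⟫ ^ 2 - ‖θ‖ ^ 2 * s)) * ξ ω ∂P
          = 0 := by
  intro s t hs hst ξ hξ hbdd
  obtain ⟨C, hC⟩ := hbdd
  classical
  set WP : Ω → ℝ → E := fun ω u => w u ω with hWPdef
  set WT : Ω → ℝ → F := fun ω u => wt u ω with hWTdef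
  have hWP0 : Measurable[MeasurableSpace.comap WP MeasurableSpace.pi] WP :=
    Measurable.of_comap_le le_rfl
  have hWT0 : Measurable[MeasurableSpace.comap WT MeasurableSpace.pi] WT :=
    Measurable.of_comap_le le_rfl
  have hWPm : ∀ u : ℝ, Measurable[MeasurableSpace.comap WP MeasurableSpace.pi] (w u) :=
    fun u => (measurable_pi_apply u).comp hWP0
  have hWTm : ∀ u : ℝ, Measurable[MeasurableSpace.comap WT MeasurableSpace.pi] (wt u) :=
    fun u => (measurable_pi_apply u).comp hWT0
  have hnat_le_WP : natFilt w s ≤ MeasurableSpace.comap WP MeasurableSpace.pi := by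
    refine iSup₂_le fun u _ => ?_
    exact (hWPm u).comap_le
  have hnat_le_amb : ∀ r : ℝ, natFilt w r ≤ (inferInstance : MeasurableSpace Ω) :=
    fun r => iSup₂_le fun u _ => (hw.meas u).comap_le
  have hWT_le_amb : MeasurableSpace.comap WT MeasurableSpace.pi
      ≤ (inferInstance : MeasurableSpace Ω) :=
    (measurable_pi_lambda WT (fun u => hwt.meas u)).comap_le
  have hBig_le_amb : (natFilt w s ⊔ MeasurableSpace.comap WT MeasurableSpace.pi) ≤ (inferInstance : MeasurableSpace Ω) :=
    sup_le (hnat_le_amb s) hWT_le_amb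
  have hM_le_Big : MFilt w wt η s ≤ (natFilt w s ⊔ MeasurableSpace.comap WT MeasurableSpace.pi) := by
    refine sup_le le_sup_left (MeasurableSpace.generateFrom_le ?_)
    rintro A ⟨u, hu, Γ, hΓ, rfl⟩
    have h1 : MeasurableSet[(natFilt w s ⊔ MeasurableSpace.comap WT MeasurableSpace.pi)] (wt u ⁻¹' Γ) := ((hWTm u).mono le_sup_right le_rfl) hΓ
    have h2 : MeasurableSet[(natFilt w s ⊔ MeasurableSpace.comap WT MeasurableSpace.pi)] (η s ⁻¹' Set.Ici u) :=
      ((hη.adapted s hs).mono le_sup_left le_rfl) measurableSet_Ici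
    have heq : {ω | wt u ω ∈ Γ ∧ u ≤ η s ω} = (wt u ⁻¹' Γ) ∩ (η s ⁻¹' Set.Ici u) := rfl
    rw [heq]
    exact h1.inter h2
  have hξBig : Measurable[(natFilt w s ⊔ MeasurableSpace.comap WT MeasurableSpace.pi)] ξ := hξ.mono hM_le_Big le_rfl
  have hξamb : Measurable ξ := hξBig.mono hBig_le_amb le_rfl
  have hξInt : Integrable ξ P := by
    refine (integrable_const C).mono' hξamb.aestronglyMeasurable ?_
    filter_upwards with ω
    simpa using hC ω
  have hinner : ∀ θ0 : E, Measurable fun v : E => ⟪v, θ0⟫ :=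
    fun θ0 => (continuous_id.inner continuous_const).measurable
  have hDamb : ∀ θ' : E, Measurable (fun ω => ⟪w t ω, θ'⟫ - ⟪w s ω, θ'⟫) :=
    fun θ' => ((hinner θ').comp (hw.meas t)).sub ((hinner θ').comp (hw.meas s))
  -- the increment in direction θ' is independent of (natFilt w s ⊔ MeasurableSpace.comap WT MeasurableSpace.pi)
  have hindepD : ∀ θ' : E, Indep (MeasurableSpace.comap
      (fun ω => ⟪w t ω, θ'⟫ - ⟪w s ω, θ'⟫) inferInstance) (natFilt w s ⊔ MeasurableSpace.comap WT MeasurableSpace.pi) P := by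
    intro θ'
    have h1 : IndepFun (fun ω => ⟪w t ω - w s ω, θ'⟫)
        (fun ω (u : Set.Icc (0:ℝ) s) => w u ω) P :=
      (hw.incr_indep s t hs hst).comp (hinner θ') measurable_id
    have hfun : (fun ω => (⟪w t ω - w s ω, θ'⟫ : ℝ))
        = fun ω => ⟪w t ω, θ'⟫ - ⟪w s ω, θ'⟫ := by
      funext ω; rw [inner_sub_left]
    rw [hfun] at h1
    have h1' : Indep (MeasurableSpace.comap
        (fun ω => ⟪w t ω, θ'⟫ - ⟪w s ω, θ'⟫) inferInstance)
        (MeasurableSpace.comap (fun ω (u : Set.Icc (0:ℝ) s) => w u ω)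
          MeasurableSpace.pi) P := h1
    have hnat_le_restr : natFilt w s
        ≤ MeasurableSpace.comap (fun ω (u : Set.Icc (0:ℝ) s) => w u ω)
            MeasurableSpace.pi := by
      refine iSup₂_le fun u hu => ?_
      have h0 : Measurable[MeasurableSpace.comap (fun ω (u : Set.Icc (0:ℝ) s) => w u ω)
          MeasurableSpace.pi] (fun ω (u : Set.Icc (0:ℝ) s) => w u ω) :=
        Measurable.of_comap_le le_rfl
      have hm : Measurable[MeasurableSpace.comap (fun ω (u : Set.Icc (0:ℝ) s) => w u ω)
          MeasurableSpace.pi] (w u) :=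
        (measurable_pi_apply (⟨u, hu⟩ : Set.Icc (0:ℝ) s)).comp h0
      exact hm.comap_le
    have hDnat : Indep (MeasurableSpace.comap
        (fun ω => ⟪w t ω, θ'⟫ - ⟪w s ω, θ'⟫) inferInstance) (natFilt w s) P :=
      indep_of_indep_of_le_right h1' hnat_le_restr
    have hindWP : Indep (MeasurableSpace.comap WP MeasurableSpace.pi)
        (MeasurableSpace.comap WT MeasurableSpace.pi) P := hind
    have hDWP : Measurable[MeasurableSpace.comap WP MeasurableSpace.pi]
        (fun ω => ⟪w t ω, θ'⟫ - ⟪w s ω, θ'⟫) :=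
      (((hinner θ').comp (hWPm t)).sub ((hinner θ').comp (hWPm s)))
    have h2 : Indep (MeasurableSpace.comap
        (fun ω => ⟪w t ω, θ'⟫ - ⟪w s ω, θ'⟫) inferInstance ⊔ natFilt w s)
        (MeasurableSpace.comap WT MeasurableSpace.pi) P :=
      indep_of_indep_of_le_left hindWP (sup_le hDWP.comap_le hnat_le_WP)
    exact aux_indep_sup (hDamb θ').comap_le (hnat_le_amb s) hWT_le_amb hDnat h2
  have hmulBig : ∀ (g : Ω → ℝ), Measurable[(natFilt w s ⊔ MeasurableSpace.comap WT MeasurableSpace.pi)] g → ∀ θ' : E,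
      IndepFun (fun ω => ⟪w t ω, θ'⟫ - ⟪w s ω, θ'⟫) g P := by
    intro g hg θ'
    exact indep_of_indep_of_le_right (hindepD θ') hg.comap_le
  have hlaw : ∀ θ' : E, ‖θ'‖ = 1 →
      Measure.map (fun ω => ⟪w t ω, θ'⟫ - ⟪w s ω, θ'⟫) P
        = gaussianReal 0 (Real.toNNReal (t - s)) := by
    intro θ' h1
    have h := hw.incr_law θ' h1 s t hs hst
    rwa [show (fun ω => (⟪w t ω - w s ω, θ'⟫ : ℝ))
        = fun ω => ⟪w t ω, θ'⟫ - ⟪w s ω, θ'⟫ from funext fun ω => inner_sub_left _ _ _] at h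
  have hmoments : ∀ θ' : E, ‖θ'‖ = 1 →
      Integrable (fun ω => ⟪w t ω, θ'⟫ - ⟪w s ω, θ'⟫) P ∧
      (∫ ω, (⟪w t ω, θ'⟫ - ⟪w s ω, θ'⟫) ∂P) = 0 ∧
      Integrable (fun ω => (⟪w t ω, θ'⟫ - ⟪w s ω, θ'⟫) ^ 2) P ∧
      (∫ ω, (⟪w t ω, θ'⟫ - ⟪w s ω, θ'⟫) ^ 2 ∂P) = t - s := by
    intro θ' h1
    have hmap := hlaw θ' h1
    have hDm := hDamb θ'
    have hid : Integrable (fun x : ℝ => x)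
        (Measure.map (fun ω => ⟪w t ω, θ'⟫ - ⟪w s ω, θ'⟫) P) := by
      rw [hmap]; exact aux_integrable_id_gaussian _
    have hsq : Integrable (fun x : ℝ => x ^ 2)
        (Measure.map (fun ω => ⟪w t ω, θ'⟫ - ⟪w s ω, θ'⟫) P) := by
      rw [hmap]; exact aux_integrable_sq_gaussian _
    have hId := (integrable_map_measure measurable_id.aestronglyMeasurable
      hDm.aemeasurable).1 hid
    have hIsq := (integrable_map_measure (measurable_id.pow_const 2).aestronglyMeasurable
      hDm.aemeasurable).1 hsq
    have hEid := integral_map (μ := P) (f := fun x : ℝ => x) hDm.aemeasurable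
      measurable_id.aestronglyMeasurable
    have hEsq := integral_map (μ := P) (f := fun x : ℝ => x ^ 2) hDm.aemeasurable
      (measurable_id.pow_const 2).aestronglyMeasurable
    rw [hmap, aux_integral_id_gaussian] at hEid
    rw [hmap, aux_integral_sq_gaussian] at hEsq
    rw [Real.coe_toNNReal _ (sub_nonneg.2 hst)] at hEsq
    exact ⟨hId, hEid.symm, hIsq, hEsq.symm⟩
  constructor
  · by_cases hInt : Integrable (fun ω => ξ ω • (w t ω - w s ω)) P
    · have key : ∀ θ0 : E, (⟪θ0, ∫ ω, ξ ω • (w t ω - w s ω) ∂P⟫ : ℝ) = 0 := by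
        intro θ0
        rcases eq_or_ne θ0 0 with rfl | hθ0
        · simp
        · set θ' : E := ‖θ0‖⁻¹ • θ0 with hθ'def
          have hθ'1 : ‖θ'‖ = 1 := by
            rw [hθ'def, norm_smul]
            simp [norm_ne_zero_iff.mpr hθ0]
          have hre : θ0 = ‖θ0‖ • θ' := by
            rw [hθ'def, smul_smul, mul_inv_cancel₀ (norm_ne_zero_iff.mpr hθ0), one_smul]
          rw [← integral_inner hInt θ0]
          have hrw : ∀ ω, (⟪θ0, ξ ω • (w t ω - w s ω)⟫ : ℝ)
              = ‖θ0‖ * (ξ ω * (⟪w t ω, θ'⟫ - ⟪w s ω, θ'⟫)) := by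
            intro ω
            rw [real_inner_smul_right, real_inner_comm]
            have hx : (⟪w t ω - w s ω, θ0⟫ : ℝ)
                = ‖θ0‖ * (⟪w t ω, θ'⟫ - ⟪w s ω, θ'⟫) := by
              calc (⟪w t ω - w s ω, θ0⟫ : ℝ) = ⟪w t ω - w s ω, ‖θ0‖ • θ'⟫ := by rw [← hre]
                _ = ‖θ0‖ * ⟪w t ω - w s ω, θ'⟫ := real_inner_smul_right _ _ _
                _ = ‖θ0‖ * (⟪w t ω, θ'⟫ - ⟪w s ω, θ'⟫) := by rw [inner_sub_left]
            rw [hx]; ring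
          simp_rw [hrw]
          rw [integral_const_mul]
          have hmul := ((hmulBig ξ hξBig θ').symm.integral_fun_mul_eq_mul_integral
            hξamb.aestronglyMeasurable (hDamb θ').aestronglyMeasurable)
          rw [hmul, (hmoments θ' hθ'1).2.1, mul_zero, mul_zero]
      have h2 := key (∫ ω, ξ ω • (w t ω - w s ω) ∂P)
      exact inner_self_eq_zero.mp h2
    · exact integral_undef hInt
  · intro θ
    rcases eq_or_ne θ 0 with rfl | hθ
    · simp
    · set θ' : E := ‖θ‖⁻¹ • θ with hθ'def
      have hθ'1 : ‖θ'‖ = 1 := by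
        rw [hθ'def, norm_smul]
        simp [norm_ne_zero_iff.mpr hθ]
      have hre : θ = ‖θ‖ • θ' := by
        rw [hθ'def, smul_smul, mul_inv_cancel₀ (norm_ne_zero_iff.mpr hθ), one_smul]
      obtain ⟨hDint, hDzero, hD2int, hD2val⟩ := hmoments θ' hθ'1
      have hDm := hDamb θ'
      -- X = inner of w s
      have hws_nat : Measurable[natFilt w s] (w s) := by
        refine Measurable.of_comap_le ?_
        refine le_trans ?_ (le_refl (natFilt w s))
        exact le_biSup (fun u => MeasurableSpace.comap (w u) inferInstance)
          (Set.mem_Icc.mpr ⟨hs, le_rfl⟩)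
      have hXnat : Measurable[natFilt w s] (fun ω => (⟪w s ω, θ'⟫ : ℝ)) :=
        (hinner θ').comp hws_nat
      have hXamb : Measurable (fun ω => (⟪w s ω, θ'⟫ : ℝ)) :=
        (hinner θ').comp (hw.meas s)
      -- integrability of X via the law of w s - w 0
      have hX0law := hw.incr_law θ' hθ'1 0 s le_rfl hs
      rw [show (fun ω => (⟪w s ω - w 0 ω, θ'⟫ : ℝ))
          = fun ω => ⟪w s ω, θ'⟫ - ⟪w 0 ω, θ'⟫ from
        funext fun ω => inner_sub_left _ _ _] at hX0law
      have hX0amb : Measurable (fun ω => (⟪w s ω, θ'⟫ : ℝ) - ⟪w 0 ω, θ'⟫) :=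
        ((hinner θ').comp (hw.meas s)).sub ((hinner θ').comp (hw.meas 0))
      have hX0int : Integrable (fun ω => (⟪w s ω, θ'⟫ : ℝ) - ⟪w 0 ω, θ'⟫) P := by
        have hid : Integrable (fun x : ℝ => x)
            (Measure.map (fun ω => (⟪w s ω, θ'⟫ : ℝ) - ⟪w 0 ω, θ'⟫) P) := by
          rw [hX0law]; exact aux_integrable_id_gaussian _
        exact (integrable_map_measure measurable_id.aestronglyMeasurable
          hX0amb.aemeasurable).1 hid
      have hXint : Integrable (fun ω => (⟪w s ω, θ'⟫ : ℝ)) P := by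
        apply hX0int.congr
        filter_upwards [hw.start] with ω hω
        rw [hω, inner_zero_left, sub_zero]
      -- Y = ξ * X
      have hYint : Integrable (fun ω => ξ ω * ⟪w s ω, θ'⟫) P := by
        refine hXint.bdd_mul (c := C) hξamb.aestronglyMeasurable ?_
        filter_upwards with ω
        simpa using hC ω
      have hYBig : Measurable[(natFilt w s ⊔ MeasurableSpace.comap WT MeasurableSpace.pi)] (fun ω => ξ ω * ⟪w s ω, θ'⟫) :=
        hξBig.mul (hXnat.mono le_sup_left le_rfl)
      have hYamb : Measurable (fun ω => ξ ω * ⟪w s ω, θ'⟫) := hξamb.mul hXamb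
      have hYD : IndepFun (fun ω => ⟪w t ω, θ'⟫ - ⟪w s ω, θ'⟫)
          (fun ω => ξ ω * ⟪w s ω, θ'⟫) P := hmulBig _ hYBig θ'
      have hYDint : Integrable (fun ω => (ξ ω * ⟪w s ω, θ'⟫)
          * (⟪w t ω, θ'⟫ - ⟪w s ω, θ'⟫)) P := hYD.symm.integrable_mul hYint hDint
      have hYDzero : ∫ ω, (ξ ω * ⟪w s ω, θ'⟫) * (⟪w t ω, θ'⟫ - ⟪w s ω, θ'⟫) ∂P = 0 := by
        rw [hYD.symm.integral_fun_mul_eq_mul_integral hYamb.aestronglyMeasurable hDm.aestronglyMeasurable,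
          hDzero, mul_zero]
      -- ξ * D^2
      have hD2indep : IndepFun (fun ω => (⟪w t ω, θ'⟫ - ⟪w s ω, θ'⟫) ^ 2) ξ P := by
        have hsq_le : MeasurableSpace.comap
            (fun ω => (⟪w t ω, θ'⟫ - ⟪w s ω, θ'⟫) ^ 2) inferInstance
            ≤ MeasurableSpace.comap
            (fun ω => ⟪w t ω, θ'⟫ - ⟪w s ω, θ'⟫) inferInstance :=
          ((Measurable.of_comap_le le_rfl).pow_const 2).comap_le
        exact indep_of_indep_of_le_right
          (indep_of_indep_of_le_left (hindepD θ') hsq_le) hξBig.comap_le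
      have hξD2int : Integrable (fun ω => ξ ω * (⟪w t ω, θ'⟫ - ⟪w s ω, θ'⟫) ^ 2) P := by
        refine hD2int.bdd_mul (c := C) hξamb.aestronglyMeasurable ?_
        filter_upwards with ω
        simpa using hC ω
      have hξD2 : ∫ ω, ξ ω * (⟪w t ω, θ'⟫ - ⟪w s ω, θ'⟫) ^ 2 ∂P
          = (∫ ω, ξ ω ∂P) * (t - s) := by
        rw [hD2indep.symm.integral_fun_mul_eq_mul_integral hξamb.aestronglyMeasurable
          ((hDm.pow_const 2)).aestronglyMeasurable, hD2val]
      -- pointwise identity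
      have hpt : ∀ ω, ((⟪w t ω, θ⟫ ^ 2 - ‖θ‖ ^ 2 * t) - (⟪w s ω, θ⟫ ^ 2 - ‖θ‖ ^ 2 * s)) * ξ ω
          = ‖θ‖ ^ 2 * (2 * ((ξ ω * ⟪w s ω, θ'⟫) * (⟪w t ω, θ'⟫ - ⟪w s ω, θ'⟫))
            + ξ ω * (⟪w t ω, θ'⟫ - ⟪w s ω, θ'⟫) ^ 2 - (t - s) * ξ ω) := by
        intro ω
        have h1 : (⟪w t ω, θ⟫ : ℝ) = ‖θ‖ * ⟪w t ω, θ'⟫ := by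
          conv_lhs => rw [hre]
          exact real_inner_smul_right _ _ _
        have h2 : (⟪w s ω, θ⟫ : ℝ) = ‖θ‖ * ⟪w s ω, θ'⟫ := by
          conv_lhs => rw [hre]
          exact real_inner_smul_right _ _ _
        rw [h1, h2]; ring
      calc ∫ ω, ((⟪w t ω, θ⟫ ^ 2 - ‖θ‖ ^ 2 * t) - (⟪w s ω, θ⟫ ^ 2 - ‖θ‖ ^ 2 * s)) * ξ ω ∂P
          = ∫ ω, ‖θ‖ ^ 2 * (2 * ((ξ ω * ⟪w s ω, θ'⟫) * (⟪w t ω, θ'⟫ - ⟪w s ω, θ'⟫))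
            + ξ ω * (⟪w t ω, θ'⟫ - ⟪w s ω, θ'⟫) ^ 2 - (t - s) * ξ ω) ∂P := by
            exact integral_congr_ae (Filter.Eventually.of_forall hpt)
        _ = ‖θ‖ ^ 2 * ∫ ω, (2 * ((ξ ω * ⟪w s ω, θ'⟫) * (⟪w t ω, θ'⟫ - ⟪w s ω, θ'⟫))
            + ξ ω * (⟪w t ω, θ'⟫ - ⟪w s ω, θ'⟫) ^ 2 - (t - s) * ξ ω) ∂P :=
            integral_const_mul _ _
        _ = ‖θ‖ ^ 2 * ((∫ ω, 2 * ((ξ ω * ⟪w s ω, θ'⟫) * (⟪w t ω, θ'⟫ - ⟪w s ω, θ'⟫)) ∂P)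
            + (∫ ω, ξ ω * (⟪w t ω, θ'⟫ - ⟪w s ω, θ'⟫) ^ 2 ∂P)
            - ∫ ω, (t - s) * ξ ω ∂P) := by
            have hadd : Integrable (fun ω =>
                2 * ((ξ ω * ⟪w s ω, θ'⟫) * (⟪w t ω, θ'⟫ - ⟪w s ω, θ'⟫))
                + ξ ω * (⟪w t ω, θ'⟫ - ⟪w s ω, θ'⟫) ^ 2) P := by
              exact (hYDint.const_mul 2).add hξD2int
            rw [integral_sub hadd (hξInt.const_mul (t - s)),
              integral_add (hYDint.const_mul 2) hξD2int]
        _ = 0 := by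
            rw [integral_const_mul, hYDzero, integral_const_mul, hξD2]
            ring
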